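/- Let q be a prime power, n ≥ 1, c ∈ F_q \ {1}, and let f_1, …, f_n : F_q → F_q be functions with c-differential uniformities δ_1, …, δ_n respectively. Let β_1, …, β_n be a basis of F_{q^n} over F_q, and let L_k : F_{q^n} → F_q denote the k-th coordinate map with respect to this basis (so that x = Σ β_k L_k(x) for all x). Then the function F : F_{q^n} → F_{q^n} defined by F(x) = Σ_{k=1}^n β_k f_k(L_k(x)) has c-differential uniformity exactly Π_{k=1}^n δ_k. -/

import Mathlib

lemma stmt6_card (n : ℕ) (K L : Type*) [Field K] [Field L]
    [Fintype K] [Fintype L] [Algebra K L] (B : Module.Basis (Fin n) K L)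
    (c : K) (f : Fin n → K → K)
    (F : L → L) (hF : ∀ x : L, F x = ∑ k, f k (B.repr x k) • B k) (a b : L) :
    Nat.card {x : L // F (x + a) - c • F x = b}
      = ∏ k, Nat.card {y : K // f k (y + B.repr a k) - c * f k y = B.repr b k} := by
  have hrepr : ∀ (g : Fin n → K) (j : Fin n), B.repr (∑ k, g k • B k) j = g j :=
    fun g j => congrFun (B.repr_sum_self g) j
  have key : ∀ x : L, (F (x + a) - c • F x = b) ↔
      ∀ k, f k (B.repr x k + B.repr a k) - c * f k (B.repr x k) = B.repr b k := by
    intro x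
    have h1 : F (x + a) - c • F x
        = ∑ k, (f k (B.repr x k + B.repr a k) - c * f k (B.repr x k)) • B k := by
      rw [hF, hF, Finset.smul_sum, ← Finset.sum_sub_distrib]
      refine Finset.sum_congr rfl fun k _ => ?_
      rw [map_add, sub_smul, smul_smul]
      simp
    rw [h1]
    constructor
    · intro h k
      have := congrArg (fun z => B.repr z k) h
      exact (hrepr _ k).symm.trans this
    · intro h
      have hb : b = ∑ k, (B.repr b k) • B k := (B.sum_repr b).symm
      rw [hb]
      exact Finset.sum_congr rfl fun k _ => by rw [h k]
  have E : {x : L // F (x + a) - c • F x = b} ≃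
      ∀ k, {y : K // f k (y + B.repr a k) - c * f k y = B.repr b k} :=
    { toFun := fun x k => ⟨B.repr x.1 k, (key x.1).mp x.2 k⟩
      invFun := fun g => ⟨∑ k, (g k : K) • B k, (key _).mpr (by
        intro k; rw [hrepr]; exact (g k).2)⟩
      left_inv := fun x => Subtype.ext (B.sum_repr x.1)
      right_inv := fun g => by
        funext k
        exact Subtype.ext (hrepr _ k) }
  rw [Nat.card_congr E, Nat.card_pi]

theorem stmt_6 (n : ℕ) (hn : 1 ≤ n) (K L : Type*) [Field K] [Field L]
    [Fintype K] [Fintype L] [Algebra K L] (B : Module.Basis (Fin n) K L)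
    (c : K) (hc : c ≠ 1)
    (f : Fin n → K → K) (δ : Fin n → ℕ)
    (hbound : ∀ (k : Fin n) (a b : K),
      Nat.card {x : K // f k (x + a) - c * f k x = b} ≤ δ k)
    (hattain : ∀ k : Fin n, ∃ a b : K,
      Nat.card {x : K // f k (x + a) - c * f k x = b} = δ k)
    (F : L → L) (hF : ∀ x : L, F x = ∑ k, f k (B.repr x k) • B k) :
    (∀ a b : L, Nat.card {x : L // F (x + a) - c • F x = b} ≤ ∏ k, δ k) ∧
    (∃ a b : L, Nat.card {x : L // F (x + a) - c • F x = b} = ∏ k, δ k) := by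
  constructor
  · intro a b
    rw [stmt6_card n K L B c f F hF a b]
    exact Finset.prod_le_prod (fun k _ => Nat.zero_le _) (fun k _ => hbound k _ _)
  · choose a0 b0 h0 using hattain
    refine ⟨∑ k, a0 k • B k, ∑ k, b0 k • B k, ?_⟩
    rw [stmt6_card n K L B c f F hF]
    refine Finset.prod_congr rfl fun k _ => ?_
    rw [congrFun (B.repr_sum_self a0) k, congrFun (B.repr_sum_self b0) k]
    exact h0 k
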